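/- (Finite Extension Property) Let A be a finite Heyting algebra, ā ∈ A^l, and let S(p̄,q̄) be a system in l parameters and m unknowns. If there exists an extension f : A → K of Heyting algebras such that S(f(ā),q̄) has a solution in K, then there exist a finite Heyting algebra K′ and an injective Heyting-algebra homomorphism g : A → K′ such that S(g(ā),q̄) has a solution in K′. -/

import Mathlib

/-- Formal Heyting terms in `n` variables. -/
inductive HeytingTerm (n : ℕ) : Type
  | var : Fin n → HeytingTerm n
  | bot : HeytingTerm n
  | top : HeytingTerm n
  | inf : HeytingTerm n → HeytingTerm n → HeytingTerm n
  | sup : HeytingTerm n → HeytingTerm n → HeytingTerm n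
  | himp : HeytingTerm n → HeytingTerm n → HeytingTerm n

namespace HeytingTerm

/-- Evaluation of a Heyting term in a Heyting algebra. -/
def eval {n : ℕ} {H : Type*} [HeytingAlgebra H] (v : Fin n → H) : HeytingTerm n → H
  | var i => v i
  | bot => ⊥
  | top => ⊤
  | inf a b => a.eval v ⊓ b.eval v
  | sup a b => a.eval v ⊔ b.eval v
  | himp a b => a.eval v ⇨ b.eval v

/-- The degree of a Heyting term: the maximal number of nested occurrences of `⇨`. -/
def degree {n : ℕ} : HeytingTerm n → ℕ
  | var _ => 0
  | bot => 0
  | top => 0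
  | inf a b => max a.degree b.degree
  | sup a b => max a.degree b.degree
  | himp a b => max a.degree b.degree + 1

end HeytingTerm

/-- `b` is a solution of the system `(t, s₁, …, s_κ)` with parameters `a`. -/
def IsSolution {l m κ : ℕ} {H : Type*} [HeytingAlgebra H]
    (t : HeytingTerm (l + m)) (s : Fin κ → HeytingTerm (l + m))
    (a : Fin l → H) (b : Fin m → H) : Prop :=
  t.eval (Fin.append a b) = ⊤ ∧ ∀ k, (s k).eval (Fin.append a b) ≠ ⊤

/-- The system `(t, s₁, …, s_κ)` with parameters `a` has a solution in `H`. -/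
def HasSolution {l m κ : ℕ} {H : Type*} [HeytingAlgebra H]
    (t : HeytingTerm (l + m)) (s : Fin κ → HeytingTerm (l + m)) (a : Fin l → H) : Prop :=
  ∃ b : Fin m → H, IsSolution t s a b

namespace FEPaux

variable {K : Type*} [HeytingAlgebra K]

/-- The set of values of all subterms of a term under a given valuation. -/
def subEvals {n : ℕ} (v : Fin n → K) : HeytingTerm n → Set K
  | .var i => {v i}
  | .bot => {⊥}
  | .top => {⊤}
  | .inf a b => (subEvals v a ∪ subEvals v b) ∪ {(HeytingTerm.inf a b).eval v}
  | .sup a b => (subEvals v a ∪ subEvals v b) ∪ {(HeytingTerm.sup a b).eval v}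
  | .himp a b => (subEvals v a ∪ subEvals v b) ∪ {(HeytingTerm.himp a b).eval v}

lemma subEvals_finite {n : ℕ} (v : Fin n → K) (u : HeytingTerm n) : (subEvals v u).Finite := by
  induction u with
  | var i => exact Set.finite_singleton _
  | bot => exact Set.finite_singleton _
  | top => exact Set.finite_singleton _
  | inf a b iha ihb => exact ((iha.union ihb).union (Set.finite_singleton _))
  | sup a b iha ihb => exact ((iha.union ihb).union (Set.finite_singleton _))
  | himp a b iha ihb => exact ((iha.union ihb).union (Set.finite_singleton _))

lemma eval_mem_subEvals {n : ℕ} (v : Fin n → K) (u : HeytingTerm n) :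
    u.eval v ∈ subEvals v u := by
  cases u with
  | var i => exact Set.mem_singleton _
  | bot => exact Set.mem_singleton _
  | top => exact Set.mem_singleton _
  | inf a b => exact Set.mem_union_right _ (Set.mem_singleton _)
  | sup a b => exact Set.mem_union_right _ (Set.mem_singleton _)
  | himp a b => exact Set.mem_union_right _ (Set.mem_singleton _)

/-- A finite sublattice of `K` containing `⊥` and `⊤`. -/
structure Good (K : Type*) [HeytingAlgebra K] where
  L : Sublattice K
  fin : (L : Set K).Finite
  bot_mem : ⊥ ∈ L
  top_mem : ⊤ ∈ L

namespace Good

variable (D : Good K)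

instance : Finite ↥D.L := Set.Finite.to_subtype D.fin

noncomputable instance : Fintype ↥D.L := Fintype.ofFinite _

instance : OrderTop ↥D.L where
  top := ⟨⊤, D.top_mem⟩
  le_top := fun x => (le_top : (x : K) ≤ ⊤)

instance : OrderBot ↥D.L where
  bot := ⟨⊥, D.bot_mem⟩
  bot_le := fun x => (bot_le : (⊥ : K) ≤ x)

open Classical in
/-- The Heyting implication on a finite sublattice. -/
noncomputable def himpAux (x y : ↥D.L) : ↥D.L :=
  (Finset.univ.filter fun d : ↥D.L => d ⊓ x ≤ y).sup id

open Classical in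
lemma le_himpAux_iff (a x y : ↥D.L) : a ≤ D.himpAux x y ↔ a ⊓ x ≤ y := by
  unfold himpAux
  constructor
  · intro h
    have h2 := inf_le_inf_right x h
    refine h2.trans ?_
    rw [Finset.sup_inf_distrib_right]
    exact Finset.sup_le fun d hd => (Finset.mem_filter.1 hd).2
  · intro h
    exact Finset.le_sup (f := id) (Finset.mem_filter.2 ⟨Finset.mem_univ _, h⟩)

noncomputable instance instHeyting : HeytingAlgebra ↥D.L :=
  { (inferInstance : Lattice ↥D.L), (inferInstance : OrderTop ↥D.L),
    (inferInstance : OrderBot ↥D.L) with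
    himp := D.himpAux
    le_himp_iff := fun {a b c} => D.le_himpAux_iff a b c
    compl := fun x => D.himpAux x ⊥
    himp_bot := fun a => rfl }

@[simp] lemma coe_top : ((⊤ : ↥D.L) : K) = ⊤ := rfl
@[simp] lemma coe_bot : ((⊥ : ↥D.L) : K) = ⊥ := rfl

lemma coe_himp (x y : ↥D.L) (h : (x : K) ⇨ (y : K) ∈ D.L) :
    ((x ⇨ y : ↥D.L) : K) = (x : K) ⇨ (y : K) := by
  apply le_antisymm
  · rw [le_himp_iff]
    exact (himp_inf_le : (x ⇨ y) ⊓ x ≤ y)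
  · have hd : (⟨(x : K) ⇨ (y : K), h⟩ : ↥D.L) ≤ x ⇨ y :=
      le_himp_iff.2 (show ((x : K) ⇨ y) ⊓ (x : K) ≤ (y : K) from himp_inf_le)
    exact hd

lemma coe_eval {n : ℕ} (v : Fin n → K) (w : Fin n → ↥D.L)
    (hw : ∀ i, (w i : K) = v i) (u : HeytingTerm n) (hu : subEvals v u ⊆ (D.L : Set K)) :
    ((u.eval w : ↥D.L) : K) = u.eval v := by
  induction u with
  | var i => exact hw i
  | bot => rfl
  | top => rfl
  | inf a b iha ihb =>
    have ha := iha fun x hx => hu (Set.mem_union_left _ (Set.mem_union_left _ hx))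
    have hb := ihb fun x hx => hu (Set.mem_union_left _ (Set.mem_union_right _ hx))
    show ((a.eval w ⊓ b.eval w : ↥D.L) : K) = a.eval v ⊓ b.eval v
    rw [Sublattice.coe_inf, ha, hb]
  | sup a b iha ihb =>
    have ha := iha fun x hx => hu (Set.mem_union_left _ (Set.mem_union_left _ hx))
    have hb := ihb fun x hx => hu (Set.mem_union_left _ (Set.mem_union_right _ hx))
    show ((a.eval w ⊔ b.eval w : ↥D.L) : K) = a.eval v ⊔ b.eval v
    rw [Sublattice.coe_sup, ha, hb]
  | himp a b iha ihb =>
    have ha := iha fun x hx => hu (Set.mem_union_left _ (Set.mem_union_left _ hx))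
    have hb := ihb fun x hx => hu (Set.mem_union_left _ (Set.mem_union_right _ hx))
    have hm : a.eval v ⇨ b.eval v ∈ D.L :=
      hu (Set.mem_union_right _ (Set.mem_singleton _))
    show ((a.eval w ⇨ b.eval w : ↥D.L) : K) = a.eval v ⇨ b.eval v
    rw [D.coe_himp _ _ (by rw [ha, hb]; exact hm), ha, hb]

/-- Corestriction of a Heyting homomorphism into `K` to a good sublattice containing its range. -/
noncomputable def corestrict {A : Type*} [HeytingAlgebra A] (f : HeytingHom A K)
    (h : ∀ x, f x ∈ D.L) : HeytingHom A ↥D.L where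
  toFun x := ⟨f x, h x⟩
  map_sup' x y := Subtype.ext (map_sup f x y)
  map_inf' x y := Subtype.ext (map_inf f x y)
  map_bot' := Subtype.ext (map_bot f)
  map_himp' x y := Subtype.ext ((map_himp f x y).trans
    (D.coe_himp ⟨f x, h x⟩ ⟨f y, h y⟩
      (show f x ⇨ f y ∈ D.L by rw [← map_himp]; exact h _)).symm)

@[simp] lemma coe_corestrict {A : Type*} [HeytingAlgebra A] (f : HeytingHom A K)
    (h : ∀ x, f x ∈ D.L) (x : A) : ((D.corestrict f h x : ↥D.L) : K) = f x := rfl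

lemma corestrict_injective {A : Type*} [HeytingAlgebra A] (f : HeytingHom A K)
    (h : ∀ x, f x ∈ D.L) (hf : Function.Injective f) :
    Function.Injective (D.corestrict f h) := fun x y hxy => by
  apply hf
  have := congrArg Subtype.val hxy
  simpa using this

lemma hasSolution_good {l m κ : ℕ} {A : Type*} [HeytingAlgebra A]
    (f : HeytingHom A K) (hr : ∀ x, f x ∈ D.L)
    (a : Fin l → A) (t : HeytingTerm (l + m)) (s : Fin κ → HeytingTerm (l + m))
    (b : Fin m → K)
    (hVmem : ∀ i, Fin.append (fun i => f (a i)) b i ∈ D.L)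
    (htsub : subEvals (Fin.append (fun i => f (a i)) b) t ⊆ (D.L : Set K))
    (hssub : ∀ k, subEvals (Fin.append (fun i => f (a i)) b) (s k) ⊆ (D.L : Set K))
    (hb1 : t.eval (Fin.append (fun i => f (a i)) b) = ⊤)
    (hb2 : ∀ k, (s k).eval (Fin.append (fun i => f (a i)) b) ≠ ⊤) :
    HasSolution t s (fun i => D.corestrict f hr (a i)) := by
  set V : Fin (l + m) → K := Fin.append (fun i => f (a i)) b with hV
  set w : Fin (l + m) → ↥D.L := fun i => ⟨V i, hVmem i⟩ with hw
  have hwV : ∀ i, ((w i : ↥D.L) : K) = V i := fun i => rfl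
  have happ : Fin.append (fun i => D.corestrict f hr (a i)) (fun j => w (Fin.natAdd l j)) = w := by
    funext i
    cases i using Fin.addCases with
    | left j =>
      rw [Fin.append_left]
      refine Subtype.ext ?_
      rw [D.coe_corestrict, hw]
      show f (a j) = V (Fin.castAdd m j)
      rw [hV, Fin.append_left]
    | right j =>
      rw [Fin.append_right]
  refine ⟨fun j => w (Fin.natAdd l j), ?_, ?_⟩
  · rw [happ]
    apply Subtype.coe_injective
    show ((HeytingTerm.eval w t : ↥D.L) : K) = ((⊤ : ↥D.L) : K)
    rw [D.coe_eval V w hwV t htsub, hb1, D.coe_top]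
  · intro k hk
    apply hb2 k
    rw [happ] at hk
    have h2 : ((HeytingTerm.eval w (s k) : ↥D.L) : K) = ((⊤ : ↥D.L) : K) :=
      congrArg Subtype.val hk
    rw [D.coe_eval V w hwV (s k) (hssub k), D.coe_top] at h2
    exact h2


end Good

lemma eval_hom {n : ℕ} {H₁ H₂ : Type*} [HeytingAlgebra H₁] [HeytingAlgebra H₂]
    (h : HeytingHom H₁ H₂) (w : Fin n → H₁) (u : HeytingTerm n) :
    h (u.eval w) = u.eval (fun i => h (w i)) := by
  induction u with
  | var i => rfl
  | bot => exact map_bot h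
  | top => exact map_top h
  | inf a b iha ihb =>
    show h (a.eval w ⊓ b.eval w) = _
    rw [map_inf, iha, ihb]; rfl
  | sup a b iha ihb =>
    show h (a.eval w ⊔ b.eval w) = _
    rw [map_sup, iha, ihb]; rfl
  | himp a b iha ihb =>
    show h (a.eval w ⇨ b.eval w) = _
    rw [map_himp, iha, ihb]; rfl

lemma HasSolution.map {l m κ : ℕ} {H₁ H₂ : Type*} [HeytingAlgebra H₁] [HeytingAlgebra H₂]
    {t : HeytingTerm (l + m)} {s : Fin κ → HeytingTerm (l + m)} {a : Fin l → H₁}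
    (h : HeytingHom H₁ H₂) (hinj : Function.Injective h)
    (hs : HasSolution t s a) : HasSolution t s (fun i => h (a i)) := by
  obtain ⟨b, hb1, hb2⟩ := hs
  have happ : Fin.append (fun i => h (a i)) (fun j => h (b j)) =
      fun i => h (Fin.append a b i) := by
    funext i
    cases i using Fin.addCases with
    | left j => simp [Fin.append_left]
    | right j => simp [Fin.append_right]
  refine ⟨fun j => h (b j), ?_, ?_⟩
  · rw [happ, ← eval_hom, hb1, map_top]
  · intro k hk
    apply hb2 k
    rw [happ, ← eval_hom] at hk
    exact hinj (hk.trans (map_top h).symm)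

/-- A copy of `Fin n` carrying no pre-existing order instances. -/
def FinCopy (n : ℕ) : Type := Fin n

/-- The identity equivalence between `FinCopy n` and `Fin n`. -/
def finCopyEquiv (n : ℕ) : FinCopy n ≃ Fin n := Equiv.refl (Fin n)

lemma exists_fin_copy (β : Type*) [HeytingAlgebra β] [Finite β] :
    ∃ (n : ℕ) (inst : HeytingAlgebra (FinCopy n)) (h : @HeytingHom β (FinCopy n) _ inst),
      Function.Bijective h := by
  obtain ⟨n, ⟨e0⟩⟩ := Finite.exists_equiv_fin β
  let e : β ≃ FinCopy n := e0.trans (finCopyEquiv n).symm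
  letI : Max (FinCopy n) := ⟨fun x y => e (e.symm x ⊔ e.symm y)⟩
  letI : Min (FinCopy n) := ⟨fun x y => e (e.symm x ⊓ e.symm y)⟩
  letI : Top (FinCopy n) := ⟨e ⊤⟩
  letI : Bot (FinCopy n) := ⟨e ⊥⟩
  letI : Compl (FinCopy n) := ⟨fun x => e ((e.symm x)ᶜ)⟩
  letI : HImp (FinCopy n) := ⟨fun x y => e (e.symm x ⇨ e.symm y)⟩
  letI : LE (FinCopy n) := ⟨fun x y => e.symm x ≤ e.symm y⟩
  letI : LT (FinCopy n) := ⟨fun x y => e.symm x < e.symm y⟩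
  letI inst : HeytingAlgebra (FinCopy n) :=
    Function.Injective.heytingAlgebra (e.symm : FinCopy n → β) e.symm.injective
      Iff.rfl Iff.rfl
      (fun a b => e.symm_apply_apply _) (fun a b => e.symm_apply_apply _)
      (e.symm_apply_apply _) (e.symm_apply_apply _)
      (fun a => e.symm_apply_apply _) (fun a b => e.symm_apply_apply _)
  refine ⟨n, inst,
    { toFun := e
      map_sup' := fun x y => ?_
      map_inf' := fun x y => ?_
      map_bot' := ?_
      map_himp' := fun x y => ?_ }, e.bijective⟩
  · show e (x ⊔ y) = e (e.symm (e x) ⊔ e.symm (e y))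
    rw [e.symm_apply_apply, e.symm_apply_apply]
  · show e (x ⊓ y) = e (e.symm (e x) ⊓ e.symm (e y))
    rw [e.symm_apply_apply, e.symm_apply_apply]
  · rfl
  · show e (x ⇨ y) = e (e.symm (e x) ⇨ e.symm (e y))
    rw [e.symm_apply_apply, e.symm_apply_apply]

end FEPaux

open FEPaux in
/-- Finite Extension Property: a system with parameters in a finite Heyting algebra `A`
which is solvable in some extension of `A` is solvable in a finite extension of `A`. -/
theorem finite_extension_property {l m κ : ℕ} (A : Type*) [HeytingAlgebra A] [Finite A]
    (a : Fin l → A) (t : HeytingTerm (l + m)) (s : Fin κ → HeytingTerm (l + m))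
    (K : Type*) [HeytingAlgebra K] (f : HeytingHom A K) (hf : Function.Injective f)
    (hsol : HasSolution t s (fun i => f (a i))) :
    ∃ (K' : Type) (inst : HeytingAlgebra K'),
      letI := inst
      Finite K' ∧ ∃ g : HeytingHom A K',
        Function.Injective g ∧ HasSolution t s (fun i => g (a i)) := by
  classical
  obtain ⟨b, hb1, hb2⟩ := hsol
  set V : Fin (l + m) → K := Fin.append (fun i => f (a i)) b with hV
  set G : Set K :=
    ((Set.range f ∪ Set.range V) ∪ subEvals V t) ∪ ⋃ k, subEvals V (s k) with hG
  have hGfin : G.Finite := by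
    refine (((Set.finite_range f).union (Set.finite_range V)).union
      (subEvals_finite V t)).union ?_
    exact Set.finite_iUnion fun k => subEvals_finite V (s k)
  obtain ⟨D, hrange, hVmem, htsub, hssub⟩ :
      ∃ D : Good K, (∀ x : A, f x ∈ D.L) ∧ (∀ i, V i ∈ D.L) ∧
        subEvals V t ⊆ (D.L : Set K) ∧ ∀ k, subEvals V (s k) ⊆ (D.L : Set K) := by
    have hmemG : ∀ x ∈ G, x ∈ latticeClosure G := fun x hx => subset_latticeClosure hx
    refine ⟨⟨⟨latticeClosure G, isSublattice_latticeClosure.1, isSublattice_latticeClosure.2⟩,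
      hGfin.latticeClosure, ?_, ?_⟩, ?_, ?_, ?_, ?_⟩
    · exact hmemG _ (Set.mem_union_left _ (Set.mem_union_left _
        (Set.mem_union_left _ ⟨⊥, map_bot f⟩)))
    · exact hmemG _ (Set.mem_union_left _ (Set.mem_union_left _
        (Set.mem_union_left _ ⟨⊤, map_top f⟩)))
    · exact fun x => hmemG _ (Set.mem_union_left _ (Set.mem_union_left _
        (Set.mem_union_left _ ⟨x, rfl⟩)))
    · exact fun i => hmemG _ (Set.mem_union_left _ (Set.mem_union_left _
        (Set.mem_union_right _ ⟨i, rfl⟩)))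
    · exact fun x hx => hmemG _ (Set.mem_union_left _ (Set.mem_union_right _ hx))
    · exact fun k x hx => hmemG _ (Set.mem_union_right _ (Set.mem_iUnion.2 ⟨k, hx⟩))
  have hsolD := D.hasSolution_good f hrange a t s b hVmem htsub hssub hb1 hb2
  have ginj := D.corestrict_injective f hrange hf
  obtain ⟨n, inst, h, hbij⟩ := exists_fin_copy ↥D.L
  exact ⟨FinCopy n, inst, Finite.of_surjective h hbij.surjective,
    h.comp (D.corestrict f hrange), hbij.injective.comp ginj, FEPaux.HasSolution.map h hbij.injective hsolD⟩
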